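/- Let F1 ∈ ℝ^{n1×n1} be symmetric positive definite, let C1 ∈ ℝ^{c×n1}, let ε > 0, δ ∈ ℝ^c, and q ∈ ℝ^c with positive entries. Define γ ∈ ℝ^c by γ_i = ε + δ_i² + (1/2) Σ_{j=1}^{c} |(C1 F1⁻¹ C1ᵀ)_{ij}| · q_j / q_i and set Γ = diag(γ). Then the matrix 2Γ − C1 F1⁻¹ C1ᵀ is positive definite. -/

import Mathlib

open Matrix Finset

/-- With `γ_i = ε + δ_i² + (1/2) Σ_j |(C1 F1⁻¹ C1ᵀ)_{ij}| q_j / q_i`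
and `Γ = diag(γ)`, the matrix `2Γ − C1 F1⁻¹ C1ᵀ` is positive definite. -/
theorem gamma_parameterization_posdef
    (n1 c : ℕ) (F1 : Matrix (Fin n1) (Fin n1) ℝ) (hF1 : F1.PosDef)
    (C1 : Matrix (Fin c) (Fin n1) ℝ) (ε : ℝ) (hε : 0 < ε)
    (δ q : Fin c → ℝ) (hq : ∀ i, 0 < q i)
    (γ : Fin c → ℝ)
    (hγ : ∀ i, γ i = ε + δ i ^ 2 +
      (1 / 2) * ∑ j, |(C1 * F1⁻¹ * C1ᵀ) i j| * q j / q i) :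
    ((2 : ℝ) • Matrix.diagonal γ - C1 * F1⁻¹ * C1ᵀ).PosDef := by
  set S := C1 * F1⁻¹ * C1ᵀ with hSdef
  have hSsym : S.IsHermitian := by
    rw [hSdef]
    have := Matrix.isHermitian_mul_mul_conjTranspose C1 hF1.1.inv
    simpa using this
  have hSji : ∀ i j, S j i = S i j := by
    intro i j
    conv_lhs => rw [← hSsym]
    simp [conjTranspose_apply]
  refine posDef_iff_dotProduct_mulVec.mpr ⟨?_, ?_⟩
  · -- Hermitian part
    unfold Matrix.IsHermitian at *
    rw [conjTranspose_sub, conjTranspose_smul, hSsym, diagonal_conjTranspose]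
    simp
  · intro x hx
    -- quadratic form
    have hqf : star x ⬝ᵥ ((2 : ℝ) • Matrix.diagonal γ - S) *ᵥ x
        = (∑ i, 2 * γ i * x i ^ 2) - ∑ i, ∑ j, x i * S i j * x j := by
      simp only [star_trivial, sub_mulVec, dotProduct_sub, smul_mulVec,
        dotProduct_smul]
      congr 1
      · simp only [dotProduct, mulVec_diagonal, smul_eq_mul, Finset.mul_sum]
        exact Finset.sum_congr rfl fun i _ => by ring
      · simp only [dotProduct, mulVec, Finset.mul_sum]
        exact Finset.sum_congr rfl fun i _ => Finset.sum_congr rfl fun j _ => by ring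
    rw [hqf]
    -- bound each term
    have key : ∀ i j, x i * S i j * x j ≤
        |S i j| * (x i ^ 2 * q j / q i + x j ^ 2 * q i / q j) / 2 := by
      intro i j
      have hqi := hq i
      have hqj := hq j
      have h1 : x i * S i j * x j ≤ |S i j| * (|x i| * |x j|) := by
        calc x i * S i j * x j ≤ |x i * S i j * x j| := le_abs_self _
        _ = |S i j| * (|x i| * |x j|) := by rw [abs_mul, abs_mul]; ring
      refine h1.trans ?_
      have habs : |x i| * |x j| ≤ (x i ^ 2 * q j / q i + x j ^ 2 * q i / q j) / 2 := by
        rw [le_div_iff₀ (by norm_num : (0:ℝ) < 2),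
          div_add_div _ _ (ne_of_gt hqi) (ne_of_gt hqj),
          le_div_iff₀ (mul_pos hqi hqj)]
        rw [← sq_abs (x i), ← sq_abs (x j)]
        nlinarith [sq_nonneg (|x i| * q j - |x j| * q i)]
      calc |S i j| * (|x i| * |x j|)
          ≤ |S i j| * ((x i ^ 2 * q j / q i + x j ^ 2 * q i / q j) / 2) :=
            mul_le_mul_of_nonneg_left habs (abs_nonneg _)
        _ = |S i j| * (x i ^ 2 * q j / q i + x j ^ 2 * q i / q j) / 2 := by ring
    -- sum the bounds
    have hsum : ∑ i, ∑ j, x i * S i j * x j ≤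
        ∑ i, ∑ j, |S i j| * q j / q i * x i ^ 2 := by
      have step1 : ∑ i, ∑ j, x i * S i j * x j ≤
          ∑ i, ∑ j, |S i j| * (x i ^ 2 * q j / q i + x j ^ 2 * q i / q j) / 2 :=
        Finset.sum_le_sum fun i _ => Finset.sum_le_sum fun j _ => key i j
      refine step1.trans_eq ?_
      have swap : ∑ i, ∑ j, |S i j| * (x j ^ 2 * q i / q j) =
          ∑ i, ∑ j, |S i j| * (x i ^ 2 * q j / q i) := by
        rw [Finset.sum_comm]
        refine Finset.sum_congr rfl fun i _ => Finset.sum_congr rfl fun j _ => ?_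
        rw [hSji i j]
      have split : ∑ i, ∑ j, |S i j| * (x i ^ 2 * q j / q i + x j ^ 2 * q i / q j) / 2
          = ((∑ i, ∑ j, |S i j| * (x i ^ 2 * q j / q i))
            + ∑ i, ∑ j, |S i j| * (x j ^ 2 * q i / q j)) / 2 := by
        rw [← Finset.sum_add_distrib, Finset.sum_div]
        refine Finset.sum_congr rfl fun i _ => ?_
        rw [← Finset.sum_add_distrib, Finset.sum_div]
        exact Finset.sum_congr rfl fun j _ => by ring
      rw [split, swap, ← two_mul, mul_div_cancel_left₀ _ (by norm_num : (2:ℝ) ≠ 0)]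
      exact Finset.sum_congr rfl fun i _ => Finset.sum_congr rfl fun j _ => by ring
    -- conclude
    have hgam : ∀ i, 2 * γ i * x i ^ 2 =
        (2 * ε + 2 * δ i ^ 2) * x i ^ 2 + (∑ j, |S i j| * q j / q i) * x i ^ 2 := by
      intro i
      rw [hγ i]
      ring
    have hfinal : (∑ i, 2 * γ i * x i ^ 2) - ∑ i, ∑ j, x i * S i j * x j ≥
        ∑ i, (2 * ε + 2 * δ i ^ 2) * x i ^ 2 := by
      have heq : ∑ i, 2 * γ i * x i ^ 2 =
          (∑ i, (2 * ε + 2 * δ i ^ 2) * x i ^ 2)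
            + ∑ i, ∑ j, |S i j| * q j / q i * x i ^ 2 := by
        rw [← Finset.sum_add_distrib]
        refine Finset.sum_congr rfl fun i _ => ?_
        rw [hgam i, Finset.sum_mul]
      rw [heq]
      linarith [hsum]
    have hpos : 0 < ∑ i, (2 * ε + 2 * δ i ^ 2) * x i ^ 2 := by
      obtain ⟨k, hk⟩ := Function.ne_iff.mp hx
      refine Finset.sum_pos' (fun i _ => by positivity) ⟨k, Finset.mem_univ k, ?_⟩
      have hxk : 0 < x k ^ 2 :=
        lt_of_le_of_ne (sq_nonneg _) (Ne.symm (pow_ne_zero 2 hk))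
      have hc : 0 < 2 * ε + 2 * δ k ^ 2 := by positivity
      exact mul_pos hc hxk
    linarith
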